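/- The invariant S_o is at least as strong as the invariant T: for any nanophrase P over α and any j, the value T_P(w_j) can be recovered from (B_P)_j; explicitly, T_P(w_j) = Σ_{A ∈ 𝒜_j} ε(A) Σ_{X ∈ 𝒜} σ_P(A,X), which equals the sum over all v of (B_P)_j(v)·(sum of all entries of v). -/

import Mathlib

/-- A phrase over alphabet `α`: a flattened list of entries where `none` is the
component separator `|` and `some (n, a)` is an occurrence of the letter with
name `n` and projection `a ∈ α`. -/
abbrev Phrase (α : Type) := List (Option (ℕ × α))

/-- `P` is a nanophrase: every occurring letter occurs exactly twice, and a
letter name determines its projection. -/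
def isNanoP {α : Type} [DecidableEq α] (P : Phrase α) : Prop :=
  ∀ p ∈ P.reduceOption, P.reduceOption.count p = 2 ∧
    ∀ q ∈ P.reduceOption, q.1 = p.1 → q.2 = p.2

/-- The three `(Q,R,S)`-homotopy moves on phrases. -/
inductive PMove {α : Type} (Q : Set α) (R : Set (α × α)) (S : Set (α × α × α)) :
    Phrase α → Phrase α → Prop
  | m1 (x y : Phrase α) (n : ℕ) (a : α) (h : a ∈ Q) :
      PMove Q R S (x ++ [some (n, a), some (n, a)] ++ y) (x ++ y)
  | m2 (x y z : Phrase α) (n m : ℕ) (a b : α) (h : (a, b) ∈ R) :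
      PMove Q R S
        (x ++ [some (n, a), some (m, b)] ++ y ++ [some (m, b), some (n, a)] ++ z)
        (x ++ y ++ z)
  | m3 (x y z t : Phrase α) (n m p : ℕ) (a b c : α) (h : (a, b, c) ∈ S) :
      PMove Q R S
        (x ++ [some (n, a), some (m, b)] ++ y ++ [some (n, a), some (p, c)] ++ z ++
          [some (m, b), some (p, c)] ++ t)
        (x ++ [some (m, b), some (n, a)] ++ y ++ [some (p, c), some (n, a)] ++ z ++
          [some (p, c), some (m, b)] ++ t)

/-- Isomorphism of phrases: an injective renaming of letter names preserving
projections and the phrase structure. -/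
def PIso {α : Type} (P₁ P₂ : Phrase α) : Prop :=
  ∃ f : Equiv.Perm ℕ, P₂ = P₁.map (Option.map fun q => (f q.1, q.2))

/-- One step of `(Q,R,S)`-homotopy: an isomorphism, a move, or an inverse move. -/
def PStep {α : Type} (Q : Set α) (R : Set (α × α)) (S : Set (α × α × α))
    (P₁ P₂ : Phrase α) : Prop :=
  PIso P₁ P₂ ∨ PMove Q R S P₁ P₂ ∨ PMove Q R S P₂ P₁

/-- `(Q,R,S)`-homotopy of phrases. -/
def PHomotopic {α : Type} (Q : Set α) (R : Set (α × α)) (S : Set (α × α × α)) :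
    Phrase α → Phrase α → Prop :=
  Relation.ReflTransGen (PStep Q R S)

/-- The number of components (length) of a phrase. -/
def compCount {α : Type} (P : Phrase α) : ℕ := (P.filter fun o => o.isNone).length + 1

/-- The data of a complete representative system for the orbits of the
involution `τ`: orbits are indexed by `1,…,l+m`, the first `l` being free
(size 2) and the last `m` fixed points; `rep q` is the chosen representative of
the `q`-th orbit and `orb a` is the index of the orbit of `a`. -/
def IsCRS {α : Type} (τ : α → α) (l m : ℕ) (rep : ℕ → α) (orb : α → ℕ) : Prop :=
  Function.Involutive τ ∧
  (∀ a : α, 1 ≤ orb a ∧ orb a ≤ l + m) ∧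
  (∀ a : α, a = rep (orb a) ∨ a = τ (rep (orb a))) ∧
  (∀ q : ℕ, 1 ≤ q → q ≤ l + m → orb (rep q) = q) ∧
  (∀ q : ℕ, 1 ≤ q → q ≤ l + m → (q ≤ l ↔ τ (rep q) ≠ rep q)) ∧
  (∀ a : α, orb (τ a) = orb a)

/-- The subgroup of `∏_{(p,q)} ℤ` by which one quotients to obtain the mixed
group `∏ K_{(p,q)}` with `K_{(p,q)} = ℤ` if `p,q ≤ l` and `ℤ/2ℤ` otherwise. -/
def Ksub (l : ℕ) : AddSubgroup ((ℕ × ℕ) → ℤ) where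
  carrier := {f | ∀ pq : ℕ × ℕ,
    (pq.1 ≤ l ∧ pq.2 ≤ l → f pq = 0) ∧ (¬(pq.1 ≤ l ∧ pq.2 ≤ l) → (2 : ℤ) ∣ f pq)}
  zero_mem' := fun pq => ⟨fun _ => rfl, fun _ => dvd_zero 2⟩
  add_mem' := by
    intro f g hf hg pq
    refine ⟨fun h => ?_, fun h => ?_⟩
    · show f pq + g pq = 0
      rw [(hf pq).1 h, (hg pq).1 h, add_zero]
    · exact dvd_add ((hf pq).2 h) ((hg pq).2 h)
  neg_mem' := by
    intro f hf pq
    refine ⟨fun h => ?_, fun h => ?_⟩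
    · show -f pq = 0
      rw [(hf pq).1 h, neg_zero]
    · exact dvd_neg.mpr ((hf pq).2 h)

/-- The group `∏ K_{(p,q)}`, `K_{(p,q)} = ℤ` if `p,q ≤ l`, else `ℤ/2ℤ`. -/
def KG (l : ℕ) := ((ℕ × ℕ) → ℤ) ⧸ Ksub l

instance (l : ℕ) : AddCommGroup (KG l) := QuotientAddGroup.Quotient.addCommGroup _

/-- The canonical projection onto `∏ K_{(p,q)}`. -/
def kmk (l : ℕ) : ((ℕ × ℕ) → ℤ) → KG l := QuotientAddGroup.mk

/-- The basis vector `e_{(p,q)}`. -/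
def ehat (p q : ℕ) : (ℕ × ℕ) → ℤ := fun pq => if pq = (p, q) then 1 else 0

/-- The coordinate of `v ∈ ∏ K_{(p,q)}` at `pq` is zero (as an element of `ℤ`
if `pq` is a free-free pair, of `ℤ/2ℤ` otherwise). -/
def ZeroCoord (l : ℕ) (v : KG l) (pq : ℕ × ℕ) : Prop :=
  ∀ f : (ℕ × ℕ) → ℤ, kmk l f = v →
    ((pq.1 ≤ l ∧ pq.2 ≤ l → f pq = 0) ∧ (¬(pq.1 ≤ l ∧ pq.2 ≤ l) → (2 : ℤ) ∣ f pq))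

/-- `v` is of type (i): its coordinates `(r,s)` with `r > l` all vanish. -/
def TypeI (l : ℕ) (v : ℕ → KG l) : Prop :=
  ∀ (j r s : ℕ), l < r → ZeroCoord l (v j) (r, s)

/-- `v` is of type (ii): its coordinates `(r,s)` with `r ≤ l` all vanish. -/
def TypeII (l : ℕ) (v : ℕ → KG l) : Prop :=
  ∀ (j r s : ℕ), r ≤ l → ZeroCoord l (v j) (r, s)

/-- `ε(a) = +1` if `a` is a chosen representative, `−1` otherwise. -/
def eps {α : Type} [DecidableEq α] (rep : ℕ → α) (orb : α → ℕ) (a : α) : ℤ :=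
  if a = rep (orb a) then 1 else -1

/-- Flatten a phrase, recording for each occurrence its letter name, projection,
and the (1-based) index of the component in which it occurs. -/
def flat {α : Type} : Phrase α → ℕ → List (ℕ × α × ℕ)
  | [], _ => []
  | Option.none :: P, i => flat P (i + 1)
  | Option.some q :: P, i => (q.1, q.2, i) :: flat P i

/-- The positions (0-based, in the flattening of `P`) of the occurrences of the
letter named `n`. -/
def posL {α : Type} (P : Phrase α) (n : ℕ) : List ℕ :=
  ((((flat P 1).zipIdx.map Prod.swap).filter fun iq => iq.2.1 = n).map Prod.fst)

/-- Position of the first occurrence of the letter named `n`. -/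
def pos1 {α : Type} (P : Phrase α) (n : ℕ) : ℕ := (posL P n).headI

/-- Position of the second occurrence of the letter named `n`. -/
def pos2 {α : Type} (P : Phrase α) (n : ℕ) : ℕ := (posL P n).getLast!

/-- The projection in `α` of the letter named `n`. -/
def projP {α : Type} [Inhabited α] (P : Phrase α) (n : ℕ) : α :=
  (((flat P 1).filter fun q => q.1 = n).headI).2.1

/-- The component containing the first occurrence of the letter named `n`. -/
def comp1 {α : Type} [Inhabited α] (P : Phrase α) (n : ℕ) : ℕ :=
  ((((flat P 1).filter fun q => q.1 = n).map fun q => q.2.2)).headI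

/-- The component containing the second occurrence of the letter named `n`. -/
def comp2 {α : Type} [Inhabited α] (P : Phrase α) (n : ℕ) : ℕ :=
  ((((flat P 1).filter fun q => q.1 = n).map fun q => q.2.2)).getLast!

/-- Fukunaga's `σ_P^j(A,B)` (a lift to `∏ ℤ`; its class in `∏ K_{(p,q)}` is the
actual value): `± e_{(p,q)}` according to the interlacement pattern of `A,B`,
the component of the relevant occurrence of `B`, and whether `|B|` is a chosen
representative; `0` if `A` and `B` are not interlaced. -/
def sigmaHat {α : Type} [DecidableEq α] [Inhabited α] (rep : ℕ → α) (orb : α → ℕ)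
    (P : Phrase α) (j : ℕ) (nA nB : ℕ) : (ℕ × ℕ) → ℤ :=
  if pos1 P nA < pos1 P nB ∧ pos1 P nB < pos2 P nA ∧ pos2 P nA < pos2 P nB ∧
      comp2 P nB = j then
    eps rep orb (projP P nB) • ehat (orb (projP P nA)) (orb (projP P nB))
  else if pos1 P nB < pos1 P nA ∧ pos1 P nA < pos2 P nB ∧ pos2 P nB < pos2 P nA ∧
      comp1 P nB = j then
    (-eps rep orb (projP P nB)) • ehat (orb (projP P nA)) (orb (projP P nB))
  else 0

/-- The list of letter names occurring in `P`. -/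
def lettersP {α : Type} (P : Phrase α) : List ℕ :=
  ((P.reduceOption.map Prod.fst)).dedup

/-- The list `𝒜_j` of letter names occurring in the `j`-th component of `P`. -/
def compLetters {α : Type} (P : Phrase α) (j : ℕ) : List ℕ :=
  ((((flat P 1).filter fun q => q.2.2 = j).map fun q => q.1)).dedup

/-- A lift of `l_{P,j}(A) = Σ_{X ∈ 𝒜} σ_P^j(A,X)`. -/
def lHat {α : Type} [DecidableEq α] [Inhabited α] (rep : ℕ → α) (orb : α → ℕ)
    (P : Phrase α) (nA : ℕ) (j : ℕ) : (ℕ × ℕ) → ℤ :=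
  ((lettersP P).map fun nX => sigmaHat rep orb P j nA nX).sum

/-- `l_P(A) ∈ (∏ K_{(p,q)})^k`, as a function of the component index `j`. -/
def lP {α : Type} [DecidableEq α] [Inhabited α] (l : ℕ) (rep : ℕ → α) (orb : α → ℕ)
    (P : Phrase α) (nA : ℕ) : ℕ → KG l :=
  fun j => kmk l (lHat rep orb P nA j)

open Classical in
/-- The type (i) (`ℤ`-valued) part of `(B_P)_j`:
`(B_P)_j(v) = Σ_{A ∈ 𝒜_j, l_P(A) = v} ε(A)` if `v` is of type (i), else `0`. -/
noncomputable def B1 {α : Type} [DecidableEq α] [Inhabited α] (l : ℕ)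
    (rep : ℕ → α) (orb : α → ℕ) (P : Phrase α) (j : ℕ) (v : ℕ → KG l) : ℤ :=
  if TypeI l v then
    (((compLetters P j).filter fun nA => lP l rep orb P nA = v).map fun nA =>
      eps rep orb (projP P nA)).sum
  else 0

open Classical in
/-- The type (ii) (`ℤ/2ℤ`-valued) part of `(B_P)_j`:
`(B_P)_j(v) = Σ_{A ∈ 𝒜_j, l_P(A) = v} ε(A) mod 2` if `v` is of type (ii), else `0`. -/
noncomputable def B2 {α : Type} [DecidableEq α] [Inhabited α] (l : ℕ)
    (rep : ℕ → α) (orb : α → ℕ) (P : Phrase α) (j : ℕ) (v : ℕ → KG l) : ZMod 2 :=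
  if TypeII l v then
    ((((compLetters P j).filter fun nA => lP l rep orb P nA = v).map fun nA =>
      eps rep orb (projP P nA)).sum : ZMod 2)
  else 0

/-- Equality of the invariants `S_o` of two nanophrases: the maps `(B_P)_j`
agree (on nonzero vectors, where they are defined). -/
def SoEq {α : Type} [DecidableEq α] [Inhabited α] (l : ℕ) (rep : ℕ → α)
    (orb : α → ℕ) (P₁ P₂ : Phrase α) : Prop :=
  ∀ (j : ℕ) (v : ℕ → KG l), v ≠ 0 →
    B1 l rep orb P₁ j v = B1 l rep orb P₂ j v ∧
    B2 l rep orb P₁ j v = B2 l rep orb P₂ j v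

section Aux
open Classical

lemma sum_map_finsum {β M : Type*} [AddCommMonoid M] (L : List β) (s : Finset ℕ)
    (g : ℕ → β → M) :
    (L.map fun x => ∑ i ∈ s, g i x).sum = ∑ i ∈ s, (L.map (g i)).sum := by
  induction L with
  | nil => simp
  | cons a L ih => simp [ih, Finset.sum_add_distrib]

lemma sum_map_smul_const {β M : Type*} [AddCommGroup M] (L : List β) (g : β → ℤ) (x : M) :
    (L.map fun a => g a • x).sum = (L.map g).sum • x := by
  induction L with
  | nil => simp
  | cons a L ih => simp [ih, add_smul]

lemma fiber_sum {β γ M : Type*} [DecidableEq β] [DecidableEq γ] [AddCommMonoid M]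
    (L : List β) (hL : L.Nodup) (f : β → γ) (G : β → M) :
    (L.map G).sum =
      (((L.map f).dedup).map fun v => ((L.filter fun a => f a = v).map G).sum).sum := by
  rw [← List.sum_toFinset _ hL]
  rw [← List.sum_toFinset _ ((L.map f).nodup_dedup)]
  have hded : ((L.map f).dedup).toFinset = L.toFinset.image f := by ext; simp
  rw [hded]
  rw [← Finset.sum_fiberwise_of_maps_to (g := f) (t := L.toFinset.image f)
    (fun a ha => Finset.mem_image_of_mem f ha) G]
  refine Finset.sum_congr rfl fun v _ => ?_
  rw [← List.sum_toFinset _ (hL.filter _), List.toFinset_filter]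
  refine Finset.sum_congr ?_ fun _ _ => rfl
  refine Finset.filter_congr fun a _ => by simp

end Aux

open Classical in
/-- `S_o` is at least as strong as `T`: for a nanophrase `P` of
length `k` and any `j`, the value
`T_P(w_j) = Σ_{A ∈ 𝒜_j} ε(A)·Σ_{X ∈ 𝒜} σ_P(A,X)` (with
`σ_P(A,X) = Σ_{j'} σ_P^{j'}(A,X)`) can be recovered from `(B_P)_j`: it equals
the sum over the values `v` of `l_P` on `𝒜_j` of
`(Σ_{A ∈ 𝒜_j, l_P(A)=v} ε(A))·(sum of all entries of v)`. -/
theorem stmt17 {α : Type} [DecidableEq α] [Inhabited α] (τ : α → α) (l m : ℕ)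
    (rep : ℕ → α) (orb : α → ℕ) (hcrs : IsCRS τ l m rep orb)
    (P : Phrase α) (k : ℕ) (hnano : isNanoP P) (hk : compCount P = k) (j : ℕ) :
    (((compLetters P j).map fun nA =>
        eps rep orb (projP P nA) •
          kmk l (((lettersP P).map fun nX =>
            ∑ j' ∈ Finset.Icc 1 k, sigmaHat rep orb P j' nA nX).sum)).sum : KG l) =
    ((((compLetters P j).map (lP l rep orb P)).dedup).map fun v =>
        ((((compLetters P j).filter fun nA => lP l rep orb P nA = v).map fun nA =>
          eps rep orb (projP P nA)).sum) • (∑ j' ∈ Finset.Icc 1 k, v j')).sum := by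
  
  classical
  have hnod : (compLetters P j).Nodup := List.nodup_dedup _
  have hF : ∀ nA : ℕ,
      (kmk l (((lettersP P).map fun nX =>
        ∑ j' ∈ Finset.Icc 1 k, sigmaHat rep orb P j' nA nX).sum) : KG l)
      = ∑ j' ∈ Finset.Icc 1 k, lP l rep orb P nA j' := by
    intro nA
    rw [sum_map_finsum]
    show (QuotientAddGroup.mk' (Ksub l)) _ = _
    rw [map_sum]
    rfl
  have hL : (((compLetters P j)).map fun nA =>
      eps rep orb (projP P nA) •
        kmk l (((lettersP P).map fun nX =>
          ∑ j' ∈ Finset.Icc 1 k, sigmaHat rep orb P j' nA nX).sum)).sum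
      = (((compLetters P j)).map fun nA =>
        eps rep orb (projP P nA) • ∑ j' ∈ Finset.Icc 1 k, lP l rep orb P nA j').sum := by
    congr 1
    exact List.map_congr_left fun nA _ => by rw [hF]
  rw [hL]
  rw [fiber_sum (compLetters P j) hnod (lP l rep orb P)
    (fun nA => eps rep orb (projP P nA) • ∑ j' ∈ Finset.Icc 1 k, lP l rep orb P nA j')]
  refine congrArg List.sum (List.map_congr_left fun v _ => ?_)
  rw [← sum_map_smul_const]
  refine congrArg List.sum (List.map_congr_left fun nA hnA => ?_)
  have : lP l rep orb P nA = v := by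
    have := List.of_mem_filter hnA
    simpa using this
  rw [this]
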